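/- arXiv:2403.18304 — 2 statements merged into one kernel-verified Lean document; each statement's English description precedes it below -/
import Mathlib

section
/- If $X$ is a random variable with $X \le y$ almost surely for some $y>0$, and $0<t\le 1$, $h>0$, then $E[e^{hX}] \le \exp\left( \frac{e^{hy}-1}{y^t} E[|X|^t] \right)$. -/
open MeasureTheory

theorem stmt1 {Ω : Type*} [MeasurableSpace Ω] (μ : Measure Ω) [IsProbabilityMeasure μ]
    (X : Ω → ℝ) (hXm : Measurable X) (y t h : ℝ) (hy : 0 < y)
    (hXy : ∀ᵐ ω ∂μ, X ω ≤ y) (ht0 : 0 < t) (ht1 : t ≤ 1) (hh : 0 < h)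
    (hint1 : Integrable (fun ω => |X ω| ^ t) μ)
    (hint2 : Integrable (fun ω => Real.exp (h * X ω)) μ) :
    ∫ ω, Real.exp (h * X ω) ∂μ ≤
      Real.exp ((Real.exp (h * y) - 1) / y ^ t * ∫ ω, |X ω| ^ t ∂μ) := by
  set c : ℝ := (Real.exp (h * y) - 1) / y ^ t with hc
  have hy0t : (0:ℝ) < y ^ t := Real.rpow_pos_of_pos hy t
  have hexp1 : 1 ≤ Real.exp (h * y) := by
    rw [Real.one_le_exp_iff]; positivity
  have hc0 : 0 ≤ c := div_nonneg (by linarith) hy0t.le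
  have key : ∀ x : ℝ, x ≤ y → Real.exp (h * x) ≤ 1 + c * |x| ^ t := by
    intro x hx
    rcases le_or_gt x 0 with h0 | h0
    · have h1 : Real.exp (h * x) ≤ 1 := by
        rw [← Real.exp_zero]
        exact Real.exp_le_exp.2 (by nlinarith)
      have h2 : 0 ≤ c * |x| ^ t := mul_nonneg hc0 (Real.rpow_nonneg (abs_nonneg x) t)
      linarith
    · set l := x / y with hl
      have hl0 : 0 < l := div_pos h0 hy
      have hl1 : l ≤ 1 := (div_le_one hy).2 hx
      have heq : (1-l) • (0:ℝ) + l • (h*y) = h * x := by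
        field_simp [hl]
        have hly : l * y = x := div_mul_cancel₀ x hy.ne'
        linear_combination h * hly
      have conv := convexOn_exp.2 (Set.mem_univ (0:ℝ)) (Set.mem_univ (h*y))
        (by linarith : (0:ℝ) ≤ 1 - l) hl0.le (by ring)
      rw [heq] at conv
      simp only [smul_eq_mul, Real.exp_zero] at conv
      have hll : l ≤ l ^ t := by
        have := Real.rpow_le_rpow_of_exponent_ge hl0 hl1 ht1
        rwa [Real.rpow_one] at this
      have habs : |x| ^ t = x ^ t := by rw [abs_of_pos h0]
      have hdiv : l ^ t = x ^ t / y ^ t := Real.div_rpow h0.le hy.le t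
      have hcx : c * |x| ^ t = (Real.exp (h * y) - 1) * l ^ t := by
        rw [habs, hdiv, hc]; ring
      have : (Real.exp (h * y) - 1) * l ≤ (Real.exp (h * y) - 1) * l ^ t :=
        mul_le_mul_of_nonneg_left hll (by linarith)
      nlinarith [conv]
  have hint3 : Integrable (fun ω => 1 + c * |X ω| ^ t) μ :=
    (integrable_const 1).add (hint1.const_mul c)
  have hmono : ∫ ω, Real.exp (h * X ω) ∂μ ≤ ∫ ω, (1 + c * |X ω| ^ t) ∂μ := by
    refine integral_mono_ae hint2 hint3 ?_
    filter_upwards [hXy] with ω hω using key _ hω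
  have hcomp : ∫ ω, (1 + c * |X ω| ^ t) ∂μ = 1 + c * ∫ ω, |X ω| ^ t ∂μ := by
    rw [integral_add (integrable_const 1) (hint1.const_mul c), integral_const,
      MeasureTheory.integral_const_mul]
    simp
  rw [hcomp] at hmono
  have := Real.add_one_le_exp (c * ∫ ω, |X ω| ^ t ∂μ)
  linarith
end

section
/- Let $Y$ be a real random variable, $p \ge 1$, $\alpha > 0$, and for $x>0$ define the truncation $Y_x^{(1)} = -x\mathbf{1}\{Y<-x\} + Y\mathbf{1}\{|Y|\le x\} + x\mathbf{1}\{Y>x\}$. If $r > p$ and $E[|Y|^p]<\infty$, then $\sum_{m=1}^{\infty} m^{\alpha(p-r)-1} E\left[|Y_{m^{\alpha}}^{(1)}|^r\right] < \infty$. -/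
open MeasureTheory Finset

/-- Abs of the truncation equals min of abs. -/
private lemma abs_trunc (a x : ℝ) (hx : 0 ≤ x) : |max (min a x) (-x)| = min |a| x := by
  rcases le_total a x with h1 | h1
  · rw [min_eq_left h1]
    rcases le_total a (-x) with h2 | h2
    · rw [max_eq_right h2, abs_neg, abs_of_nonneg hx, min_eq_right]
      rw [abs_of_nonpos (by linarith)]; linarith
    · rw [max_eq_left h2]
      rcases le_total 0 a with h3 | h3
      · rw [abs_of_nonneg h3, min_eq_left h1]
      · rw [abs_of_nonpos h3, min_eq_left (by linarith)]
  · rw [min_eq_right h1, max_eq_left (by linarith), abs_of_nonneg hx,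
      min_eq_right (by rw [abs_of_nonneg (le_trans hx h1)]; exact h1)]

private lemma min_rpow {a b c : ℝ} (ha : 0 ≤ a) (hb : 0 ≤ b) (hc : 0 ≤ c) :
    min a b ^ c = min (a ^ c) (b ^ c) := by
  rcases le_total a b with h | h
  · rw [min_eq_left h, min_eq_left (Real.rpow_le_rpow ha h hc)]
  · rw [min_eq_right h, min_eq_right (Real.rpow_le_rpow hb h hc)]

/-- Basic MVT-type bound via interval integral comparison. -/
private lemma rpow_int_bound {c : ℝ} (hc : c ≤ 0) (hc1 : c ≠ -1) {b : ℝ} (hb : 2 ≤ b) :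
    b ^ c ≤ (b ^ (c + 1) - (b - 1) ^ (c + 1)) / (c + 1) := by
  have h0 : (0:ℝ) < b - 1 := by linarith
  have hab : b - 1 ≤ b := by linarith
  have hnot : (0:ℝ) ∉ Set.uIcc (b - 1) b := by
    rw [Set.uIcc_of_le hab]
    intro h
    exact absurd h.1 (by linarith)
  have hI : ∫ x in (b-1)..b, x ^ c = (b ^ (c + 1) - (b - 1) ^ (c + 1)) / (c + 1) :=
    integral_rpow (Or.inr ⟨hc1, hnot⟩)
  rw [← hI]
  have hconst : ∫ x in (b-1)..b, (fun _ : ℝ => b ^ c) x = b ^ c := by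
    rw [intervalIntegral.integral_const]
    simp [smul_eq_mul]
  calc b ^ c = ∫ x in (b-1)..b, (fun _ : ℝ => b ^ c) x := hconst.symm
    _ ≤ ∫ x in (b-1)..b, x ^ c := by
        apply intervalIntegral.integral_mono_on hab
          (intervalIntegrable_const)
          (intervalIntegral.intervalIntegrable_rpow (Or.inr hnot))
        intro x hx
        exact Real.rpow_le_rpow_of_nonpos (lt_of_lt_of_le h0 hx.1) hx.2 hc

/-- Head partial sum bound : ∑_{m<N} (m+1)^{s-1} ≤ (1+1/s) N^s. -/
private lemma head_sum {s : ℝ} (hs : 0 < s) (N : ℕ) :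
    ∑ m ∈ Finset.range N, ((m : ℝ) + 1) ^ (s - 1) ≤ (1 + 1 / s) * (N : ℝ) ^ s := by
  rcases le_or_gt s 1 with hs1 | hs1
  · induction N with
    | zero => simp [Real.zero_rpow hs.ne']
    | succ N ih =>
      rw [Finset.sum_range_succ]
      have key : ((N : ℝ) + 1) ^ (s - 1) ≤ (1 + 1 / s) * (((N:ℝ)+1) ^ s - (N : ℝ) ^ s) := by
        rcases Nat.eq_zero_or_pos N with h0 | h0
        · subst h0
          simp only [Nat.cast_zero, zero_add, Real.one_rpow, Real.zero_rpow hs.ne']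
          have : (0:ℝ) < 1/s := by positivity
          nlinarith
        · have hb : (2:ℝ) ≤ (N : ℝ) + 1 := by
            have : (1:ℝ) ≤ (N : ℝ) := by exact_mod_cast h0
            linarith
          have := rpow_int_bound (c := s - 1) (by linarith) (by intro h; nlinarith) hb
          rw [show s - 1 + 1 = s by ring, show (N:ℝ) + 1 - 1 = (N:ℝ) by ring] at this
          have hd : (0:ℝ) ≤ ((N:ℝ)+1) ^ s - (N : ℝ) ^ s := by
            have := Real.rpow_le_rpow (by positivity) (show (N:ℝ) ≤ (N:ℝ)+1 by linarith) hs.le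
            linarith
          calc ((N : ℝ) + 1) ^ (s - 1) ≤ (((N:ℝ)+1) ^ s - (N : ℝ) ^ s) / s := this
            _ = (1/s) * (((N:ℝ)+1) ^ s - (N : ℝ) ^ s) := by ring
            _ ≤ (1 + 1 / s) * (((N:ℝ)+1) ^ s - (N : ℝ) ^ s) := by nlinarith
      push_cast
      nlinarith [ih]
  · rcases Nat.eq_zero_or_pos N with h0 | h0
    · subst h0; simp [Real.zero_rpow hs.ne']
    have hN : (0:ℝ) < (N : ℝ) := by exact_mod_cast h0
    have hterm : ∀ m ∈ Finset.range N, ((m : ℝ) + 1) ^ (s - 1) ≤ (N : ℝ) ^ (s - 1) := by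
      intro m hm
      apply Real.rpow_le_rpow (by positivity) _ (by linarith)
      have : (m : ℕ) < N := Finset.mem_range.mp hm
      exact_mod_cast Nat.succ_le_of_lt this
    calc ∑ m ∈ Finset.range N, ((m : ℝ) + 1) ^ (s - 1)
        ≤ ∑ _m ∈ Finset.range N, (N : ℝ) ^ (s - 1) := Finset.sum_le_sum hterm
      _ = (N : ℝ) * (N : ℝ) ^ (s - 1) := by
          rw [Finset.sum_const, Finset.card_range, nsmul_eq_mul]
      _ = (N : ℝ) ^ s := by
          conv_rhs => rw [show s = 1 + (s - 1) by ring]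
          rw [Real.rpow_add hN, Real.rpow_one]
      _ ≤ (1 + 1 / s) * (N : ℝ) ^ s := by
          have h1 : (0:ℝ) ≤ (N : ℝ) ^ s := Real.rpow_nonneg hN.le s
          have h2 : (0:ℝ) < 1/s := by positivity
          nlinarith

private lemma summable_shift (c : ℝ) (hc : c < -1) (M : ℕ) :
    Summable (fun k : ℕ => ((M : ℝ) + (k : ℝ) + 1) ^ c) := by
  have h1 : Summable (fun n : ℕ => (n : ℝ) ^ c) := Real.summable_nat_rpow.mpr hc
  have h2 := (summable_nat_add_iff (M + 1)).mpr h1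
  refine h2.congr fun k => ?_
  congr 1
  push_cast
  ring

/-- Tail sum bound: ∑_{k} (M+k+1)^{-s-1} ≤ M^{-s}/s. -/
private lemma tail_sum {s : ℝ} (hs : 0 < s) {M : ℕ} (hM : 1 ≤ M) :
    ∑' k : ℕ, ((M : ℝ) + (k : ℝ) + 1) ^ (-s - 1) ≤ (M : ℝ) ^ (-s) / s := by
  have hsum := summable_shift (-s - 1) (by linarith) M
  have key : ∀ n : ℕ, ∑ k ∈ Finset.range n, ((M : ℝ) + (k : ℝ) + 1) ^ (-s - 1)
      ≤ ((M : ℝ) ^ (-s) - ((M : ℝ) + (n : ℝ)) ^ (-s)) / s := by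
    intro n
    induction n with
    | zero => simp
    | succ n ih =>
      rw [Finset.sum_range_succ]
      have hb : (2:ℝ) ≤ (M : ℝ) + (n : ℝ) + 1 := by
        have h1 : (1:ℝ) ≤ (M : ℝ) := by exact_mod_cast hM
        have h2 : (0:ℝ) ≤ (n : ℝ) := Nat.cast_nonneg n
        linarith
      have hstep := rpow_int_bound (c := -s - 1) (by linarith) (by intro h; nlinarith) hb
      rw [show -s - 1 + 1 = -s by ring, show (M:ℝ) + (n:ℝ) + 1 - 1 = (M:ℝ) + (n:ℝ) by ring]
        at hstep
    -- hstep : (M+n+1)^(-s-1) ≤ ((M+n+1)^(-s) - (M+n)^(-s)) / (-s)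
      have hstep' : ((M : ℝ) + (n : ℝ) + 1) ^ (-s - 1)
          ≤ (((M:ℝ) + (n:ℝ)) ^ (-s) - ((M:ℝ) + (n:ℝ) + 1) ^ (-s)) / s := by
        have heq : (((M:ℝ)+(n:ℝ)+1) ^ (-s) - ((M:ℝ)+(n:ℝ)) ^ (-s)) / (-s)
            = (((M:ℝ) + (n:ℝ)) ^ (-s) - ((M:ℝ) + (n:ℝ) + 1) ^ (-s)) / s := by
          rw [div_neg, ← neg_div, neg_sub]
        rw [heq] at hstep
        exact hstep
      push_cast
      push_cast at ih hstep'
      ring_nf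
      ring_nf at ih hstep'
      linarith
  apply Summable.tsum_le_of_sum_range_le hsum
  intro n
  refine (key n).trans ?_
  have h1 : (0:ℝ) ≤ ((M : ℝ) + (n : ℝ)) ^ (-s) :=
    Real.rpow_nonneg (by positivity) _
  exact div_le_div_of_nonneg_right (by linarith) hs.le


private lemma pointwise_summable {α p r : ℝ} (hα : 0 < α) (hp : 0 < p) (hrp : p < r) {y : ℝ}
    (hy : 0 ≤ y) :
    Summable (fun m : ℕ =>
      min (((m : ℝ) + 1) ^ (α * p - 1)) (((m : ℝ) + 1) ^ (-(α * (r - p)) - 1) * y ^ r)) := by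
  have h1 : Summable (fun m : ℕ => ((m : ℝ) + 1) ^ (-(α * (r - p)) - 1)) := by
    refine (summable_shift (-(α * (r - p)) - 1) (by nlinarith) 0).congr fun k => ?_
    norm_num
  refine Summable.of_nonneg_of_le (fun m => le_min (Real.rpow_nonneg (by positivity) _)
    (mul_nonneg (Real.rpow_nonneg (by positivity) _) (Real.rpow_nonneg hy _)))
    (fun m => min_le_right _ _) (h1.mul_right _)

private lemma pointwise_bound {α p r : ℝ} (hα : 0 < α) (hp : 0 < p) (hrp : p < r) {y : ℝ}
    (hy : 0 ≤ y) :
    ∑' m : ℕ, min (((m : ℝ) + 1) ^ (α * p - 1)) (((m : ℝ) + 1) ^ (-(α * (r - p)) - 1) * y ^ r)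
      ≤ ((1 + 1 / (α * p)) * 3 ^ (α * p) + 1 / (α * (r - p))) * (1 + y ^ p) := by
  set s₁ := α * p with hs₁def
  set s₂ := α * (r - p) with hs₂def
  have hs₁ : 0 < s₁ := mul_pos hα hp
  have hs₂ : 0 < s₂ := mul_pos hα (by linarith)
  set f : ℕ → ℝ := fun m =>
    min (((m : ℝ) + 1) ^ (s₁ - 1)) (((m : ℝ) + 1) ^ (-s₂ - 1) * y ^ r) with hfdef
  have hfs : Summable f := pointwise_summable hα hp hrp hy
  set M : ℕ := ⌈y ^ α⁻¹⌉₊ + 1 with hMdef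
  have hM1 : 1 ≤ M := Nat.le_add_left 1 _
  have hu0 : 0 ≤ y ^ α⁻¹ := Real.rpow_nonneg hy _
  have hMc : y ^ α⁻¹ ≤ (M : ℝ) := by
    have := Nat.le_ceil (y ^ α⁻¹)
    rw [hMdef]
    push_cast
    linarith
  have hMu : (M : ℝ) ≤ y ^ α⁻¹ + 2 := by
    have := Nat.ceil_lt_add_one hu0
    rw [hMdef]
    push_cast
    linarith
  have hyp0 : 0 ≤ y ^ p := Real.rpow_nonneg hy _
  have hyr : 0 ≤ y ^ r := Real.rpow_nonneg hy _
  have hhead : ∑ i ∈ Finset.range M, f i ≤ (1 + 1 / s₁) * 3 ^ s₁ * (1 + y ^ p) := by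
    have h1 : ∑ i ∈ Finset.range M, f i ≤ ∑ i ∈ Finset.range M, ((i : ℝ) + 1) ^ (s₁ - 1) :=
      Finset.sum_le_sum fun i _ => min_le_left _ _
    have h2 := head_sum hs₁ M
    have h3 : (M : ℝ) ^ s₁ ≤ 3 ^ s₁ * (1 + y ^ p) := by
      have hA : (M : ℝ) ≤ 3 * max (y ^ α⁻¹) 1 := by
        have l1 := le_max_left (y ^ α⁻¹) 1
        have l2 := le_max_right (y ^ α⁻¹) 1
        linarith
      have hB : (M : ℝ) ^ s₁ ≤ (3 * max (y ^ α⁻¹) 1) ^ s₁ :=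
        Real.rpow_le_rpow (Nat.cast_nonneg M) hA hs₁.le
      have hC : (3 * max (y ^ α⁻¹) 1) ^ s₁ = 3 ^ s₁ * (max (y ^ α⁻¹) 1) ^ s₁ :=
        Real.mul_rpow (by norm_num) (le_trans zero_le_one (le_max_right _ _))
      have hD : (max (y ^ α⁻¹) 1) ^ s₁ ≤ 1 + y ^ p := by
        rcases le_total (y ^ α⁻¹) 1 with h | h
        · rw [max_eq_right h, Real.one_rpow]
          linarith
        · rw [max_eq_left h]
          have he : (y ^ α⁻¹) ^ s₁ = y ^ p := by
            rw [← Real.rpow_mul hy]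
            congr 1
            rw [hs₁def]
            field_simp
          rw [he]
          linarith
      have h30 : (0:ℝ) ≤ 3 ^ s₁ := Real.rpow_nonneg (by norm_num) _
      calc (M : ℝ) ^ s₁ ≤ 3 ^ s₁ * (max (y ^ α⁻¹) 1) ^ s₁ := by rw [← hC]; exact hB
        _ ≤ 3 ^ s₁ * (1 + y ^ p) := mul_le_mul_of_nonneg_left hD h30
    have hpos : (0:ℝ) ≤ 1 + 1 / s₁ := by positivity
    calc ∑ i ∈ Finset.range M, f i ≤ (1 + 1 / s₁) * (M : ℝ) ^ s₁ := le_trans h1 h2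
      _ ≤ (1 + 1 / s₁) * (3 ^ s₁ * (1 + y ^ p)) := mul_le_mul_of_nonneg_left h3 hpos
      _ = (1 + 1 / s₁) * 3 ^ s₁ * (1 + y ^ p) := by ring
  have htail : ∑' i : ℕ, f (i + M) ≤ 1 / s₂ * (1 + y ^ p) := by
    have hptw : ∀ i : ℕ, f (i + M) ≤ ((M : ℝ) + (i : ℝ) + 1) ^ (-s₂ - 1) * y ^ r := by
      intro i
      have hcast : (((i + M : ℕ) : ℝ) + 1) = (M : ℝ) + (i : ℝ) + 1 := by push_cast; ring
      calc f (i + M) ≤ (((i + M : ℕ) : ℝ) + 1) ^ (-s₂ - 1) * y ^ r := min_le_right _ _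
        _ = ((M : ℝ) + (i : ℝ) + 1) ^ (-s₂ - 1) * y ^ r := by rw [hcast]
    have hsum2 : Summable (fun i : ℕ => ((M : ℝ) + (i : ℝ) + 1) ^ (-s₂ - 1) * y ^ r) :=
      (summable_shift _ (by linarith) M).mul_right _
    have h1 : ∑' i : ℕ, f (i + M) ≤ ∑' i : ℕ, ((M : ℝ) + (i : ℝ) + 1) ^ (-s₂ - 1) * y ^ r :=
      Summable.tsum_le_tsum hptw ((summable_nat_add_iff M).mpr hfs) hsum2
    have h2 : ∑' i : ℕ, ((M : ℝ) + (i : ℝ) + 1) ^ (-s₂ - 1) * y ^ r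
        = (∑' i : ℕ, ((M : ℝ) + (i : ℝ) + 1) ^ (-s₂ - 1)) * y ^ r := tsum_mul_right
    have h3 := tail_sum hs₂ hM1
    have h4 : (M : ℝ) ^ (-s₂) * y ^ r ≤ y ^ p := by
      rcases eq_or_lt_of_le hy with h0 | h0
      · have hy0 : y ^ r = 0 := by
          rw [← h0]; exact Real.zero_rpow (show (0:ℝ) < r by linarith).ne'
        have hyp' : y ^ p = 0 := by
          rw [← h0]; exact Real.zero_rpow hp.ne'
        rw [hy0, hyp', mul_zero]
      · have hu : 0 < y ^ α⁻¹ := Real.rpow_pos_of_pos h0 _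
        have hA : (M : ℝ) ^ (-s₂) ≤ (y ^ α⁻¹) ^ (-s₂) :=
          Real.rpow_le_rpow_of_nonpos hu hMc (by linarith)
        have hB : (y ^ α⁻¹) ^ (-s₂) = y ^ (p - r) := by
          rw [← Real.rpow_mul hy]
          congr 1
          rw [hs₂def]
          field_simp
          ring
        have hC : y ^ (p - r) * y ^ r = y ^ p := by
          rw [← Real.rpow_add h0]
          norm_num
        calc (M : ℝ) ^ (-s₂) * y ^ r ≤ (y ^ α⁻¹) ^ (-s₂) * y ^ r :=
              mul_le_mul_of_nonneg_right hA hyr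
          _ = y ^ p := by rw [hB, hC]
    calc ∑' i : ℕ, f (i + M) ≤ (∑' i : ℕ, ((M : ℝ) + (i : ℝ) + 1) ^ (-s₂ - 1)) * y ^ r :=
          h1.trans_eq h2
      _ ≤ ((M : ℝ) ^ (-s₂) / s₂) * y ^ r := mul_le_mul_of_nonneg_right h3 hyr
      _ = 1 / s₂ * ((M : ℝ) ^ (-s₂) * y ^ r) := by ring
      _ ≤ 1 / s₂ * y ^ p := by
          have : (0:ℝ) ≤ 1 / s₂ := by positivity
          exact mul_le_mul_of_nonneg_left h4 this
      _ ≤ 1 / s₂ * (1 + y ^ p) := by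
          have : (0:ℝ) ≤ 1 / s₂ := by positivity
          nlinarith
  calc ∑' m : ℕ, f m = ∑ i ∈ Finset.range M, f i + ∑' i : ℕ, f (i + M) :=
        (Summable.sum_add_tsum_nat_add M hfs).symm
    _ ≤ (1 + 1 / s₁) * 3 ^ s₁ * (1 + y ^ p) + 1 / s₂ * (1 + y ^ p) := add_le_add hhead htail
    _ = ((1 + 1 / s₁) * 3 ^ s₁ + 1 / s₂) * (1 + y ^ p) := by ring

theorem stmt8 {Ω : Type*} [MeasurableSpace Ω] (μ : Measure Ω) [IsProbabilityMeasure μ]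
    (Y : Ω → ℝ) (hYm : Measurable Y) (p α r : ℝ) (hp : 1 ≤ p) (hα : 0 < α)
    (hr : p < r) (hint : Integrable (fun ω => |Y ω| ^ p) μ) :
    Summable (fun m : ℕ =>
      ((m : ℝ) + 1) ^ (α * (p - r) - 1) *
        ∫ ω, |max (min (Y ω) (((m : ℝ) + 1) ^ α)) (-((m : ℝ) + 1) ^ α)| ^ r ∂μ) := by
  have hp0 : 0 < p := lt_of_lt_of_le zero_lt_one hp
  have hr0 : 0 < r := lt_trans hp0 hr
  have hb0 : ∀ m : ℕ, (0:ℝ) < (m : ℝ) + 1 := fun m => by positivity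
  have hx0 : ∀ m : ℕ, (0:ℝ) < ((m : ℝ) + 1) ^ α := fun m => Real.rpow_pos_of_pos (hb0 m) α
  have hrew : ∀ m : ℕ,
      ((m : ℝ) + 1) ^ (α * (p - r) - 1) *
        ∫ ω, |max (min (Y ω) (((m : ℝ) + 1) ^ α)) (-((m : ℝ) + 1) ^ α)| ^ r ∂μ
      = ∫ ω, min (((m : ℝ) + 1) ^ (α * p - 1))
          (((m : ℝ) + 1) ^ (-(α * (r - p)) - 1) * |Y ω| ^ r) ∂μ := by
    intro m
    rw [← integral_const_mul]
    refine integral_congr_ae (Filter.Eventually.of_forall fun ω => ?_)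
    have e1 : |max (min (Y ω) (((m : ℝ) + 1) ^ α)) (-((m : ℝ) + 1) ^ α)| =
        min |Y ω| (((m : ℝ) + 1) ^ α) := abs_trunc _ _ (hx0 m).le
    dsimp only
    rw [e1, min_rpow (abs_nonneg _) (hx0 m).le (by linarith),
      mul_min_of_nonneg _ _ (Real.rpow_nonneg (hb0 m).le _), min_comm]
    congr 1
    · rw [← Real.rpow_mul (hb0 m).le, ← Real.rpow_add (hb0 m)]
      congr 1
      ring
    · congr 2
      ring
  have hint_h : ∀ m : ℕ, Integrable (fun ω => min (((m : ℝ) + 1) ^ (α * p - 1))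
      (((m : ℝ) + 1) ^ (-(α * (r - p)) - 1) * |Y ω| ^ r)) μ := by
    intro m
    have hmeas : Measurable fun ω => min (((m : ℝ) + 1) ^ (α * p - 1))
        (((m : ℝ) + 1) ^ (-(α * (r - p)) - 1) * |Y ω| ^ r) :=
      measurable_const.min (((hYm.abs).pow measurable_const).const_mul _)
    refine Integrable.mono' (integrable_const (((m : ℝ) + 1) ^ (α * p - 1)))
      hmeas.aestronglyMeasurable (Filter.Eventually.of_forall fun ω => ?_)
    have hnn : (0:ℝ) ≤ min (((m : ℝ) + 1) ^ (α * p - 1))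
        (((m : ℝ) + 1) ^ (-(α * (r - p)) - 1) * |Y ω| ^ r) :=
      le_min (Real.rpow_nonneg (hb0 m).le _)
        (mul_nonneg (Real.rpow_nonneg (hb0 m).le _) (Real.rpow_nonneg (abs_nonneg _) _))
    rw [Real.norm_eq_abs, abs_of_nonneg hnn]
    exact min_le_left _ _
  have hintC : Integrable (fun ω =>
      ((1 + 1 / (α * p)) * 3 ^ (α * p) + 1 / (α * (r - p))) * (1 + |Y ω| ^ p)) μ :=
    ((integrable_const (1:ℝ)).add hint).const_mul _
  refine summable_of_sum_range_le
    (c := ∫ ω, ((1 + 1 / (α * p)) * 3 ^ (α * p) + 1 / (α * (r - p))) * (1 + |Y ω| ^ p) ∂μ)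
    (fun m => mul_nonneg (Real.rpow_nonneg (hb0 m).le _)
      (integral_nonneg fun ω => Real.rpow_nonneg (abs_nonneg _) _)) (fun n => ?_)
  calc ∑ m ∈ Finset.range n, ((m : ℝ) + 1) ^ (α * (p - r) - 1) *
        ∫ ω, |max (min (Y ω) (((m : ℝ) + 1) ^ α)) (-((m : ℝ) + 1) ^ α)| ^ r ∂μ
      = ∑ m ∈ Finset.range n, ∫ ω, min (((m : ℝ) + 1) ^ (α * p - 1))
          (((m : ℝ) + 1) ^ (-(α * (r - p)) - 1) * |Y ω| ^ r) ∂μ :=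
        Finset.sum_congr rfl fun m _ => hrew m
    _ = ∫ ω, ∑ m ∈ Finset.range n, min (((m : ℝ) + 1) ^ (α * p - 1))
          (((m : ℝ) + 1) ^ (-(α * (r - p)) - 1) * |Y ω| ^ r) ∂μ :=
        (integral_finset_sum _ fun m _ => hint_h m).symm
    _ ≤ ∫ ω, ((1 + 1 / (α * p)) * 3 ^ (α * p) + 1 / (α * (r - p))) * (1 + |Y ω| ^ p) ∂μ := by
        refine integral_mono (integrable_finset_sum _ fun m _ => hint_h m) hintC fun ω => ?_
        have hsum := pointwise_summable (p := p) (r := r) hα hp0 hr (abs_nonneg (Y ω))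
        calc ∑ m ∈ Finset.range n, min (((m : ℝ) + 1) ^ (α * p - 1))
              (((m : ℝ) + 1) ^ (-(α * (r - p)) - 1) * |Y ω| ^ r)
            ≤ ∑' m : ℕ, min (((m : ℝ) + 1) ^ (α * p - 1))
              (((m : ℝ) + 1) ^ (-(α * (r - p)) - 1) * |Y ω| ^ r) :=
              Summable.sum_le_tsum (Finset.range n)
                (fun i _ => le_min (Real.rpow_nonneg (hb0 i).le _)
                  (mul_nonneg (Real.rpow_nonneg (hb0 i).le _)
                    (Real.rpow_nonneg (abs_nonneg _) _))) hsum
          _ ≤ _ := pointwise_bound hα hp0 hr (abs_nonneg (Y ω))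
end
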